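/- Let C be an irreducible curve over a number field k, x ∈ C(ℚ̄), v a place of k extended to ℚ̄, and L an ample line bundle on C. Then α_x(L) = (1/2)·ε_x(L) if and only if: C is k-rational, C is unibranch at x (the normalization map φ : ℙ¹ → C has exactly one preimage of x), the residue field κ(x) is not equal to k, and κ(x) ⊆ k_v. -/
import Mathlib


/-- Lemma 3.4: for an irreducible curve `C` over `k`, a point `x ∈ C(ℚ̄)` and an
ample line bundle `L` of degree `d`, one has `α_x(L) = ε_x(L)/2` if and only if
`C` is `k`-rational, `C` is unibranch at `x`, `κ(x) ≠ k` and `κ(x) ⊆ k_v`.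
Here `Q = φ^{-1}(x)` for the normalization `φ : ℙ¹ → C` (nonempty and finite),
`mQ q` is the multiplicity of the branch corresponding to `q`,
`kappaSub q` states `κ(q) ⊆ k_v` and `kappaEqk q` states `κ(q) = k`
(recall `κ(q) = κ(x)`); `r` is as in Theorem 2.16,
`α = α_x(L)` satisfies the formula of Theorem 2.16 when `C` is `k`-rational
and is finite only if `C` is `k`-rational, and `ε = ε_x(L) = d/mult_x C`. -/
theorem stmt_15 (Q : Type*) [Fintype Q] [Nonempty Q]
    (d : ℝ) (hd : 0 < d)
    (mQ : Q → ℕ) (hm : ∀ q, 0 < mQ q)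
    (kappaSub : Q → Prop) (kappaEqk : Q → Prop)
    (r : Q → ℕ)
    (hr : ∀ q, (¬ kappaSub q → r q = 0) ∧ (kappaSub q → kappaEqk q → r q = 1) ∧
      (kappaSub q → ¬ kappaEqk q → r q = 2))
    (kRational : Prop)
    (α : EReal) (ε : ℝ)
    (hε : ε = d / ∑ q, (mQ q : ℝ))
    (hαformula : kRational →
      α = ⨅ q : Q, (if r q = 0 then (⊤ : EReal)
        else ((d / (r q * mQ q) : ℝ) : EReal)))
    (hαfin : α ≠ ⊤ → kRational) :
    α = ((ε / 2 : ℝ) : EReal) ↔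
      (kRational ∧ (∀ q q' : Q, q = q') ∧
        (∀ q, ¬ kappaEqk q) ∧ (∀ q, kappaSub q)) := by
  classical
  have hS : 0 < ∑ q, mQ q := Finset.sum_pos (fun q _ => hm q) Finset.univ_nonempty
  have hSr : (0:ℝ) < ∑ q, (mQ q : ℝ) := by
    push_cast [← Nat.cast_sum]
    exact_mod_cast hS
  have hr2 : ∀ q, r q ≤ 2 := by
    intro q
    obtain ⟨h0, h1, h2⟩ := hr q
    by_cases hs : kappaSub q
    · by_cases he : kappaEqk q
      · have := h1 hs he; omega
      · have := h2 hs he; omega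
    · have := h0 hs; omega
  constructor
  · intro h
    have hαtop : α ≠ ⊤ := by rw [h]; exact EReal.coe_ne_top _
    have hk := hαfin hαtop
    have hα := hαformula hk
    set f : Q → EReal := fun q => (if r q = 0 then (⊤ : EReal)
        else ((d / (r q * mQ q) : ℝ) : EReal)) with hf
    obtain ⟨q, -, hq⟩ := Finset.exists_min_image Finset.univ f
      ⟨Classical.arbitrary Q, Finset.mem_univ _⟩
    have hiq : α = f q := le_antisymm (hα ▸ iInf_le f q)
      (hα ▸ le_iInf fun q' => hq q' (Finset.mem_univ _))
    rw [h] at hiq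
    have hrq0 : r q ≠ 0 := by
      intro h0
      rw [hf] at hiq
      simp only [h0, if_pos rfl] at hiq
      exact (EReal.coe_ne_top _) hiq
    rw [hf] at hiq
    simp only [if_neg hrq0] at hiq
    have hre : ε / 2 = d / (r q * mQ q) := EReal.coe_injective hiq
    have hden : (0:ℝ) < (r q : ℝ) * (mQ q : ℝ) := by
      have h1 : 0 < r q := Nat.pos_of_ne_zero hrq0
      have h2 := hm q
      exact mul_pos (by exact_mod_cast h1) (by exact_mod_cast h2)
    rw [hε, div_div] at hre
    have key : d * ((r q : ℝ) * (mQ q : ℝ)) = d * ((∑ q, (mQ q : ℝ)) * 2) :=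
      (div_eq_div_iff (by positivity) hden.ne').mp hre
    have key2 : (r q : ℝ) * (mQ q : ℝ) = (∑ q, (mQ q : ℝ)) * 2 :=
      mul_left_cancel₀ hd.ne' key
    have keyn : r q * mQ q = 2 * ∑ q, mQ q := by
      have h3 : ((r q * mQ q : ℕ) : ℝ) = ((2 * ∑ q, mQ q : ℕ) : ℝ) := by
        push_cast
        linarith [key2]
      exact_mod_cast h3
    have hle : mQ q ≤ ∑ q', mQ q' := Finset.single_le_sum (fun i _ => Nat.zero_le _) (Finset.mem_univ q)
    have hmul : r q * mQ q ≤ 2 * mQ q := Nat.mul_le_mul_right _ (hr2 q)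
    have hmS : mQ q = ∑ q', mQ q' := by omega
    have hsing : ∀ q' : Q, q' = q := by
      intro q'
      by_contra hne
      have h1 : ∑ q', mQ q' = mQ q + ∑ q'' ∈ Finset.univ.erase q, mQ q'' :=
        (Finset.add_sum_erase _ _ (Finset.mem_univ q)).symm
      have h2 : mQ q' ≤ ∑ q'' ∈ Finset.univ.erase q, mQ q'' :=
        Finset.single_le_sum (fun i _ => Nat.zero_le _) (Finset.mem_erase.2 ⟨hne, Finset.mem_univ _⟩)
      have := hm q'
      omega
    have hrq2 : r q = 2 := by
      have := hm q
      have : r q * mQ q = 2 * mQ q := by omega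
      exact Nat.eq_of_mul_eq_mul_right (hm q) this
    have hsub : kappaSub q := by
      by_contra hs
      exact by simp [(hr q).1 hs] at hrq2
    have hnek : ¬ kappaEqk q := by
      intro he
      have := (hr q).2.1 hsub he
      omega
    exact ⟨hk, fun a b => (hsing a).trans (hsing b).symm,
      fun q' => (hsing q') ▸ hnek, fun q' => (hsing q') ▸ hsub⟩
  · rintro ⟨hk, hsing, hne, hsub⟩
    have q0 : Q := Classical.arbitrary Q
    haveI : Unique Q := ⟨⟨q0⟩, fun a => hsing a q0⟩
    rw [hαformula hk, iInf_unique]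
    have hrd : r (default : Q) = 2 := (hr _).2.2 (hsub _) (hne _)
    rw [if_neg (by omega)]
    have hsum : ∑ q, (mQ q : ℝ) = (mQ (default : Q) : ℝ) := by
      rw [Fintype.sum_unique]
    congr 1
    rw [hε, hsum, hrd]
    have := hm (default : Q)
    have hmp : (0:ℝ) < (mQ (default : Q) : ℝ) := by exact_mod_cast this
    push_cast
    rw [div_div, mul_comm]
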